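/- Let 1 ≤ l < n, r ∈ Z_n, η ∈ P^1(k) and s ≥ 1. Then M_s(l,r,η)^* ≅ M_s(n−l, 1−r, −ηq^l). -/

import Mathlib

open scoped TensorProduct
open MulOpposite

noncomputable section

/-- The Drinfeld double `H_n(1,q)` of the Taft algebra `H_n(q)`, presented by generators
`a, b, c, d` and relations, together with its Hopf algebra structure data. -/
structure TaftDouble (k : Type) [Field k] where
  n : ℕ
  hn : 2 < n
  q : k
  hq : IsPrimitiveRoot q n
  H : Type
  [ringH : Ring H]
  [algH : Algebra k H]
  a : H
  b : H
  c : H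
  d : H
  gen : Algebra.adjoin k {a, b, c, d} = ⊤
  finDim : Module.finrank k H = n ^ 4
  rel_ba : b * a = q • (a * b)
  rel_db : d * b = q • (b * d)
  rel_ca : c * a = q • (a * c)
  rel_dc : d * c = q • (c * d)
  rel_bc : b * c = c * b
  rel_an : a ^ n = 0
  rel_bn : b ^ n = 1
  rel_cn : c ^ n = 1
  rel_dn : d ^ n = 0
  rel_da : d * a - q • (a * d) = 1 - b * c
  comul : H →ₐ[k] H ⊗[k] H
  counit : H →ₐ[k] k
  antipode : H →ₐ[k] Hᵐᵒᵖ
  comul_a : comul a = a ⊗ₜ[k] b + 1 ⊗ₜ[k] a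
  comul_b : comul b = b ⊗ₜ[k] b
  comul_c : comul c = c ⊗ₜ[k] c
  comul_d : comul d = d ⊗ₜ[k] c + 1 ⊗ₜ[k] d
  counit_a : counit a = 0
  counit_b : counit b = 1
  counit_c : counit c = 1
  counit_d : counit d = 0
  antipode_a : antipode a = op (-(a * b ^ (n - 1)))
  antipode_b : antipode b = op (b ^ (n - 1))
  antipode_c : antipode c = op (c ^ (n - 1))
  antipode_d : antipode d = op (-(d * c ^ (n - 1)))

variable {k : Type} [Field k]

instance (S : TaftDouble k) : Ring S.H := S.ringH
instance (S : TaftDouble k) : Algebra k S.H := S.algH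

/-- `c(t)`, the integer part of `(t+1)/2`. -/
def cc (t : ℕ) : ℕ := (t + 1) / 2

/-- Extension of a finitely indexed family by zero. -/
def fe {M : Type} [Zero M] {N : ℕ} (v : Fin N → M) (t : ℕ) : M :=
  if h : t < N then v ⟨t, h⟩ else 0

/-- Extension of a doubly indexed family by zero. -/
def fe2 {M : Type} [Zero M] {N1 N2 : ℕ} (v : Fin N1 × Fin N2 → M) (t1 t2 : ℕ) : M :=
  if h : t1 < N1 ∧ t2 < N2 then v (⟨t1, h.1⟩, ⟨t2, h.2⟩) else 0

/-- Rescaling of a point of `P^1(k) = k ∪ {∞}`, with the convention `α · ∞ = ∞`. -/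
def pscale (α : k) (η : WithTop k) : WithTop k := η.map (fun x => α * x)

namespace TaftDouble

variable (S : TaftDouble k)

/-- `q^r` for `r ∈ ℤ_n` (well defined since `q^n = 1`). -/
def qpow (r : ZMod S.n) : k := S.q ^ r.val

/-- The `q`-integer `(i)_q = 1 + q + ⋯ + q^{i-1}`. -/
def qint (i : ℕ) : k := ∑ j ∈ Finset.range i, S.q ^ j

/-- `α_i(l) = (i)_q (1 - q^{i-l})`. -/
def alphaq (i l : ℕ) : k := S.qint i * (1 - S.q ^ ((i : ℤ) - (l : ℤ)))

/-- A bundled finite-dimensional left module over `H_n(1,q)`. -/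
structure SMod where
  carrier : Type
  [acg : AddCommGroup carrier]
  [modH : Module S.H carrier]
  [modk : Module k carrier]
  [tower : IsScalarTower k S.H carrier]

attribute [instance] SMod.acg SMod.modH SMod.modk SMod.tower

variable {S}

/-- Bundle a module. -/
def SMod.mk' (S : TaftDouble k) (T : Type) [AddCommGroup T] [Module S.H T] [Module k T]
    [IsScalarTower k S.H T] : SMod S := ⟨T⟩

/-- The submodule `W` of `X`, viewed as a bundled module. -/
def SMod.sub (X : SMod S) (W : Submodule S.H X.carrier) : SMod S where
  carrier := W

/-- `X` satisfies `IsV l r` iff `X ≅ V(l,r)`, the simple module with standard basis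
`v_1, …, v_l` (here indexed by `Fin l`, shifted by one). -/
def IsV (S : TaftDouble k) (l : ℕ) (r : ZMod S.n) (X : SMod S) : Prop :=
  ∃ v : Module.Basis (Fin l) k X.carrier,
    (∀ i : Fin l, S.a • (v i : X.carrier) = fe v ((i : ℕ) + 1)) ∧
    (∀ i : Fin l, S.d • (v i : X.carrier) = S.alphaq (i : ℕ) l • fe v ((i : ℕ) - 1)) ∧
    (∀ i : Fin l, S.b • (v i : X.carrier) = S.qpow (r + ((i : ℕ) : ZMod S.n)) • v i) ∧
    (∀ i : Fin l, S.c • (v i : X.carrier)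
      = S.qpow (((i : ℕ) : ZMod S.n) + 1 - r - (l : ZMod S.n)) • v i)

/-- `X ≅ P(l,r)` for `1 ≤ l < n`: the projective cover of `V(l,r)`, given by its
standard basis `v_1, …, v_{2n}` (indexed here by `Fin (2n)`, shifted by one). -/
def IsPexp (S : TaftDouble k) (l : ℕ) (r : ZMod S.n) (X : SMod S) : Prop :=
  ∃ v : Module.Basis (Fin (2 * S.n)) k X.carrier,
    (∀ i : Fin (2 * S.n), S.a • (v i : X.carrier) =
      if (i : ℕ) = S.n - 1 then 0 else fe v ((i : ℕ) + 1)) ∧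
    (∀ i : Fin (2 * S.n), S.b • (v i : X.carrier) =
      if (i : ℕ) < S.n then S.qpow (r + ((i : ℕ) : ZMod S.n)) • v i
      else S.qpow (r + (l : ZMod S.n) + ((i : ℕ) : ZMod S.n)) • v i) ∧
    (∀ i : Fin (2 * S.n), S.c • (v i : X.carrier) =
      if (i : ℕ) < S.n then
        S.qpow (((i : ℕ) : ZMod S.n) + 1 - (l : ZMod S.n) - r) • v i
      else S.qpow (((i : ℕ) : ZMod S.n) + 1 - r) • v i) ∧
    (∀ i : Fin (2 * S.n), S.d • (v i : X.carrier) =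
      if (i : ℕ) ≤ l then
        S.q ^ (i : ℕ) • fe v (2 * S.n - l - 1 + (i : ℕ))
          + S.alphaq (i : ℕ) l • fe v ((i : ℕ) - 1)
      else if (i : ℕ) ≤ S.n then
        S.alphaq ((i : ℕ) - l) (S.n - l) • fe v ((i : ℕ) - 1)
      else if (i : ℕ) ≤ 2 * S.n - l then
        S.alphaq ((i : ℕ) - S.n) (S.n - l) • fe v ((i : ℕ) - 1)
      else S.alphaq ((i : ℕ) + l - 2 * S.n) l • fe v ((i : ℕ) - 1))

/-- `X ≅ P(l,r)`, with the convention `P(n,r) = V(n,r)`. -/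
def IsP (S : TaftDouble k) (l : ℕ) (r : ZMod S.n) (X : SMod S) : Prop :=
  if l = S.n then S.IsV S.n r X else S.IsPexp l r X

/-- `X ≅ M_s(l,r,η)` for `η ∈ k`: the band module, via its standard basis
`v_{i,j}` (`1 ≤ i ≤ n`, `1 ≤ j ≤ s`), indexed here by `Fin n × Fin s` (shifted by one). -/
def IsBandFin (S : TaftDouble k) (s l : ℕ) (r : ZMod S.n) (η : k) (X : SMod S) : Prop :=
  ∃ v : Module.Basis (Fin S.n × Fin s) k X.carrier,
    (∀ p : Fin S.n × Fin s, S.a • (v p : X.carrier) = fe2 v ((p.1 : ℕ) + 1) (p.2 : ℕ)) ∧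
    (∀ p : Fin S.n × Fin s, S.d • (v p : X.carrier) =
      if (p.1 : ℕ) = 0 then
        (if (p.2 : ℕ) = 0 then 0 else fe2 v (S.n - 1) ((p.2 : ℕ) - 1))
          + (η * S.q ^ l) • fe2 v (S.n - 1) (p.2 : ℕ)
      else if (p.1 : ℕ) ≤ S.n - l then
        S.alphaq (p.1 : ℕ) (S.n - l) • fe2 v ((p.1 : ℕ) - 1) (p.2 : ℕ)
      else S.alphaq ((p.1 : ℕ) + l - S.n) l • fe2 v ((p.1 : ℕ) - 1) (p.2 : ℕ)) ∧
    (∀ p : Fin S.n × Fin s, S.b • (v p : X.carrier) =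
      S.qpow (r + (l : ZMod S.n) + ((p.1 : ℕ) : ZMod S.n)) • v p) ∧
    (∀ p : Fin S.n × Fin s, S.c • (v p : X.carrier) =
      S.qpow (((p.1 : ℕ) : ZMod S.n) + 1 - r) • v p)

/-- `X ≅ M_s(l,r,∞)`: the band module with parameter `∞`, via its standard basis. -/
def IsBandInf (S : TaftDouble k) (s l : ℕ) (r : ZMod S.n) (X : SMod S) : Prop :=
  ∃ v : Module.Basis (Fin S.n × Fin s) k X.carrier,
    (∀ p : Fin S.n × Fin s, S.a • (v p : X.carrier) =
      if (p.1 : ℕ) = S.n - l - 1 then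
        (if (p.2 : ℕ) = 0 then 0 else fe2 v ((p.1 : ℕ) + 1) ((p.2 : ℕ) - 1))
      else fe2 v ((p.1 : ℕ) + 1) (p.2 : ℕ)) ∧
    (∀ p : Fin S.n × Fin s, S.d • (v p : X.carrier) =
      if (p.1 : ℕ) = 0 then fe2 v (S.n - 1) (p.2 : ℕ)
      else if (p.1 : ℕ) ≤ S.n - l then
        S.alphaq (p.1 : ℕ) (S.n - l) • fe2 v ((p.1 : ℕ) - 1) (p.2 : ℕ)
      else S.alphaq ((p.1 : ℕ) + l - S.n) l • fe2 v ((p.1 : ℕ) - 1) (p.2 : ℕ)) ∧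
    (∀ p : Fin S.n × Fin s, S.b • (v p : X.carrier) =
      S.qpow (r + (l : ZMod S.n) + ((p.1 : ℕ) : ZMod S.n)) • v p) ∧
    (∀ p : Fin S.n × Fin s, S.c • (v p : X.carrier) =
      S.qpow (((p.1 : ℕ) : ZMod S.n) + 1 - r) • v p)

/-- `X ≅ M_s(l,r,η)` for `η ∈ P^1(k) = k ∪ {∞}`. -/
def IsBand (S : TaftDouble k) (s l : ℕ) (r : ZMod S.n) (η : WithTop k) (X : SMod S) : Prop :=
  WithTop.recTopCoe (S.IsBandInf s l r X) (fun x => S.IsBandFin s l r x X) η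

/-- `X` is an internal direct sum of `c` copies of `P(l,r)`. -/
def IsProjSum (S : TaftDouble k) (c : ℕ) (l : ℕ) (r : ZMod S.n) (X : SMod S) : Prop :=
  ∃ W : Fin c → Submodule S.H X.carrier,
    DirectSum.IsInternal W ∧ ∀ i, S.IsP l r (X.sub (W i))

/-- `X ≅ Ω^m V(l,r)` for `m ≥ 0`: defined recursively, `Ω^{m+1} V(l,r)` being the kernel of
the projective cover `(m+1)P(…) → Ω^m V(l,r)` from the minimal projective resolution. -/
def IsOmPos (S : TaftDouble k) : ℕ → ℕ → ZMod S.n → SMod S → Prop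
  | 0, l, r, X => S.IsV l r X
  | m + 1, l, r, X =>
    ∃ X' Q : SMod S,
      S.IsOmPos m l r X' ∧
      S.IsProjSum (m + 1) (if m % 2 = 0 then l else S.n - l)
        (if m % 2 = 0 then r else r + (l : ZMod S.n)) Q ∧
      ∃ f : Q.carrier →ₗ[S.H] X'.carrier,
        Function.Surjective f ∧
        (∀ N : Submodule S.H Q.carrier, N ⊔ LinearMap.ker f = ⊤ → N = ⊤) ∧
        Nonempty (X.carrier ≃ₗ[S.H] LinearMap.ker f)

/-- `X ≅ Ω^{-m} V(l,r)` for `m ≥ 0`: defined recursively, `Ω^{-(m+1)} V(l,r)` being the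
cokernel of the injective envelope `Ω^{-m} V(l,r) → (m+1)P(…)` from the minimal injective
resolution. -/
def IsOmNeg (S : TaftDouble k) : ℕ → ℕ → ZMod S.n → SMod S → Prop
  | 0, l, r, X => S.IsV l r X
  | m + 1, l, r, X =>
    ∃ X' Q : SMod S,
      S.IsOmNeg m l r X' ∧
      S.IsProjSum (m + 1) (if m % 2 = 0 then l else S.n - l)
        (if m % 2 = 0 then r else r + (l : ZMod S.n)) Q ∧
      ∃ f : X'.carrier →ₗ[S.H] Q.carrier,
        Function.Injective f ∧
        (∀ N : Submodule S.H Q.carrier, N ⊓ LinearMap.range f = ⊥ → N = ⊥) ∧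
        Nonempty (X.carrier ≃ₗ[S.H] (Q.carrier ⧸ LinearMap.range f))

/-- `X ≅ Ω^m V(l,r)` for `m ∈ ℤ`. -/
def IsOm (S : TaftDouble k) (m : ℤ) (l : ℕ) (r : ZMod S.n) (X : SMod S) : Prop :=
  if 0 ≤ m then S.IsOmPos m.toNat l r X else S.IsOmNeg (-m).toNat l r X

/-- Descriptions of the indecomposable modules over `H_n(1,q)`:
simples `V(l,r)`, projectives `P(l,r)`, string modules `Ω^m V(l,r)`,
and band modules `M_s(l,r,η)`. -/
inductive Desc (S : TaftDouble k) where
  | V (l : ℕ) (r : ZMod S.n)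
  | P (l : ℕ) (r : ZMod S.n)
  | Om (m : ℤ) (l : ℕ) (r : ZMod S.n)
  | B (s l : ℕ) (r : ZMod S.n) (η : WithTop k)

/-- `X` is (isomorphic to) the indecomposable module described by `D`. -/
def Matches (S : TaftDouble k) (D : Desc S) (X : SMod S) : Prop :=
  match D with
  | Desc.V l r => S.IsV l r X
  | Desc.P l r => S.IsP l r X
  | Desc.Om m l r => S.IsOm m l r X
  | Desc.B s l r η => S.IsBand s l r η X

/-- `X` decomposes as the direct sum of the indecomposable modules described by
the family `D`. -/
def DecompAs (S : TaftDouble k) (X : SMod S) {ι : Type} (D : ι → Desc S) : Prop :=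
  ∃ W : ι → Submodule S.H X.carrier,
    (letI := Classical.decEq ι; DirectSum.IsInternal W) ∧
    ∀ i, S.Matches (D i) (X.sub (W i))

/-- The representation of `H_n(1,q)` on a module. -/
def rep (X : SMod S) : S.H →ₐ[k] Module.End k X.carrier :=
  Algebra.lsmul k k X.carrier

/-- The representation of `H_n(1,q)` on the tensor product of two modules, via the
comultiplication. -/
def tensRep (X Y : SMod S) : S.H →ₐ[k] Module.End k (X.carrier ⊗[k] Y.carrier) :=
  (Module.endTensorEndAlgHom (R := k) (S := k) (A := k)
      (M := X.carrier) (N := Y.carrier)).comp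
    ((Algebra.TensorProduct.map (rep X) (rep Y)).comp S.comul)

/-- The carrier of the tensor product of two modules. -/
def TensC (X Y : SMod S) : Type := X.carrier ⊗[k] Y.carrier

instance (X Y : SMod S) : AddCommGroup (TensC X Y) :=
  inferInstanceAs (AddCommGroup (X.carrier ⊗[k] Y.carrier))

instance (X Y : SMod S) : Module k (TensC X Y) :=
  inferInstanceAs (Module k (X.carrier ⊗[k] Y.carrier))

/-- The `H_n(1,q)`-module structure on the tensor product `X ⊗_k Y`, via the
comultiplication. -/
instance (X Y : SMod S) : Module S.H (TensC X Y) :=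
  letI : Module (Module.End k (X.carrier ⊗[k] Y.carrier)) (TensC X Y) :=
    inferInstanceAs (Module (Module.End k (X.carrier ⊗[k] Y.carrier))
      (X.carrier ⊗[k] Y.carrier))
  Module.compHom (TensC X Y) (tensRep X Y).toRingHom

instance (X Y : SMod S) : IsScalarTower k S.H (TensC X Y) :=
  ⟨fun r h m => LinearMap.congr_fun (map_smul (tensRep X Y) r h) m⟩

/-- The tensor product of two modules over `H_n(1,q)`, with action induced by the
comultiplication. -/
def SMod.tens (X Y : SMod S) : SMod S := ⟨TensC X Y⟩

/-- The representation of `H_n(1,q)` on the dual of a module, via the antipode. -/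
def dualRep (X : SMod S) : S.H →ₐ[k] Module.End k (Module.Dual k X.carrier) where
  toFun h := ((rep X) (unop (S.antipode h))).dualMap
  map_one' := by
    ext φ x
    simp
  map_mul' h₁ h₂ := by
    ext φ x
    simp [map_mul, Module.End.mul_apply, unop_mul]
  map_zero' := by
    ext φ x
    simp
  map_add' h₁ h₂ := by
    ext φ x
    simp [map_add, unop_add]
  commutes' r := by
    ext φ x
    simp [AlgHom.commutes, Module.algebraMap_end_apply]

/-- The carrier of the dual module. -/
def DualC (X : SMod S) : Type := Module.Dual k X.carrier

instance (X : SMod S) : AddCommGroup (DualC X) :=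
  inferInstanceAs (AddCommGroup (Module.Dual k X.carrier))

instance (X : SMod S) : Module k (DualC X) :=
  inferInstanceAs (Module k (Module.Dual k X.carrier))

/-- The `H_n(1,q)`-module structure on the dual `X^*`, with the action
`(h·f)(m) = f(S(h)·m)`. -/
instance (X : SMod S) : Module S.H (DualC X) :=
  letI : Module (Module.End k (Module.Dual k X.carrier)) (DualC X) :=
    inferInstanceAs (Module (Module.End k (Module.Dual k X.carrier))
      (Module.Dual k X.carrier))
  Module.compHom (DualC X) (dualRep X).toRingHom

instance (X : SMod S) : IsScalarTower k S.H (DualC X) :=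
  ⟨fun r h m => LinearMap.congr_fun (map_smul (dualRep X) r h) m⟩

/-- The dual module `X^* = Hom_k(X,k)` with the action `(h·f)(m) = f(S(h)·m)`. -/
def SMod.dual (X : SMod S) : SMod S := ⟨DualC X⟩

end TaftDouble

open TaftDouble


namespace TaftDouble
variable {k : Type} [Field k] (S : TaftDouble k)

lemma n_pos : 0 < S.n := by have := S.hn; omega

lemma q_pow_n : S.q ^ S.n = 1 := S.hq.pow_eq_one

lemma q_ne_zero : S.q ≠ 0 := by
  intro h
  have := S.q_pow_n
  rw [h, zero_pow (by have := S.hn; omega)] at this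
  exact zero_ne_one this

lemma q_ne_one : S.q ≠ 1 := by
  have : (1 : ℕ) < S.n := by have := S.hn; omega
  intro h
  have := S.hq.pow_ne_one_of_pos_of_lt (l := 1) one_ne_zero this
  simp [h] at this

lemma q_pow_mod (m : ℕ) : S.q ^ (m % S.n) = S.q ^ m := by
  conv_rhs => rw [← Nat.div_add_mod m S.n]
  rw [pow_add, pow_mul, S.q_pow_n, one_pow, one_mul]

lemma qpow_natCast (m : ℕ) : S.qpow ((m : ZMod S.n)) = S.q ^ m := by
  haveI : NeZero S.n := ⟨by have := S.hn; omega⟩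
  rw [qpow, ZMod.val_natCast, S.q_pow_mod]

lemma qpow_ne_zero (z : ZMod S.n) : S.qpow z ≠ 0 := pow_ne_zero _ S.q_ne_zero

lemma qpow_add (x y : ZMod S.n) : S.qpow (x + y) = S.qpow x * S.qpow y := by
  haveI : NeZero S.n := ⟨by have := S.hn; omega⟩
  rw [qpow, ZMod.val_add, S.q_pow_mod, pow_add, qpow, qpow]

lemma qpow_zero : S.qpow 0 = 1 := by
  haveI : NeZero S.n := ⟨by have := S.hn; omega⟩
  simp [qpow]

lemma qpow_intCast (m : ℤ) : S.qpow ((m : ZMod S.n)) = S.q ^ m := by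
  haveI : NeZero S.n := ⟨by have := S.hn; omega⟩
  obtain ⟨a, b, rfl⟩ : ∃ (a b : ℕ), m = (a : ℤ) - b := ⟨m.toNat, (-m).toNat, by omega⟩
  have h1 : S.qpow ((a : ZMod S.n)) = S.qpow (((a:ℤ) - b : ZMod S.n)) * S.qpow ((b : ZMod S.n)) := by
    rw [← S.qpow_add]; norm_cast; congr 1; push_cast; ring
  have h2 : S.q ^ ((a:ℤ) - b) * S.q ^ (b:ℤ) = S.q ^ (a:ℤ) := by
    rw [← zpow_add₀ S.q_ne_zero]; congr 1; ring
  have h3 : S.qpow ((b : ZMod S.n)) ≠ 0 := S.qpow_ne_zero _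
  have h4 : S.qpow ((a : ZMod S.n)) = S.q ^ (a:ℤ) := by
    rw [qpow_natCast, zpow_natCast]
  have h5 : S.qpow ((b : ZMod S.n)) = S.q ^ (b:ℤ) := by
    rw [qpow_natCast, zpow_natCast]
  rw [h4, h5] at h1
  rw [zpow_sub₀ S.q_ne_zero]
  rw [eq_div_iff (zpow_ne_zero _ S.q_ne_zero)]
  push_cast
  exact_mod_cast h1.symm

lemma qpow_pow_pred (z : ZMod S.n) : S.qpow z ^ (S.n - 1) = S.qpow (-z) := by
  have h : S.qpow z ^ (S.n - 1) * S.qpow z = S.qpow (-z) * S.qpow z := by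
    rw [← pow_succ, Nat.sub_add_cancel S.n_pos, ← S.qpow_add, neg_add_cancel, S.qpow_zero]
    rw [qpow, ← pow_mul, mul_comm, pow_mul, S.q_pow_n, one_pow]
  exact mul_right_cancel₀ (S.qpow_ne_zero z) h

end TaftDouble
namespace TaftDouble
variable {k : Type} [Field k] {S : TaftDouble k}

/-- Evaluate a dual element. -/
def dev {X : SMod S} (φ : X.dual.carrier) (m : X.carrier) : k :=
  (show Module.Dual k X.carrier from φ) m

lemma dev_smulH {X : SMod S} (h : S.H) (φ : X.dual.carrier) (m : X.carrier) :
    dev (h • φ) m = dev φ (unop (S.antipode h) • m) := rfl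

lemma dev_smulk {X : SMod S} (α : k) (φ : X.dual.carrier) (m : X.carrier) :
    dev (α • φ) m = α * dev φ m := by with_unfolding_all rfl

lemma dev_add {X : SMod S} (φ ψ : X.dual.carrier) (m : X.carrier) :
    dev (φ + ψ) m = dev φ m + dev ψ m := by with_unfolding_all rfl

lemma dev_zero {X : SMod S} (m : X.carrier) : dev (0 : X.dual.carrier) m = 0 := by
  with_unfolding_all rfl

lemma dev_apply_smulk {X : SMod S} (φ : X.dual.carrier) (α : k) (m : X.carrier) :
    dev φ (α • m) = α * dev φ m := by
  show (show Module.Dual k X.carrier from φ) (α • m) = _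
  rw [map_smul]
  rfl

lemma dev_apply_add {X : SMod S} (φ : X.dual.carrier) (m m' : X.carrier) :
    dev φ (m + m') = dev φ m + dev φ m' := by
  show (show Module.Dual k X.carrier from φ) (m + m') = _
  rw [map_add]
  rfl

lemma dev_apply_zero {X : SMod S} (φ : X.dual.carrier) :
    dev φ (0 : X.carrier) = 0 := by
  show (show Module.Dual k X.carrier from φ) 0 = _
  rw [map_zero]

lemma dev_apply_neg {X : SMod S} (φ : X.dual.carrier) (m : X.carrier) :
    dev φ (-m) = - dev φ m := by
  show (show Module.Dual k X.carrier from φ) (-m) = _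
  rw [map_neg]
  rfl

lemma dev_ext {X : SMod S} {ι : Type} (v : Module.Basis ι k X.carrier) {φ ψ : X.dual.carrier}
    (h : ∀ i, dev φ (v i) = dev ψ (v i)) : φ = ψ := by
  show (show Module.Dual k X.carrier from φ) = (show Module.Dual k X.carrier from ψ)
  exact v.ext h

/-- The rescaled, reindexed dual basis. -/
def wB {X : SMod S} {ι : Type} [Fintype ι] [DecidableEq ι] (v : Module.Basis ι k X.carrier)
    (σ : Equiv.Perm ι) (μ : ι → k) (hμ : ∀ i, IsUnit (μ i)) :
    Module.Basis ι k X.dual.carrier :=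
  ((v.dualBasis.reindex σ).isUnitSMul hμ).map
    (LinearEquiv.refl k (Module.Dual k X.carrier) :
      Module.Dual k X.carrier ≃ₗ[k] X.dual.carrier)

lemma dev_wB {X : SMod S} {ι : Type} [Fintype ι] [DecidableEq ι] (v : Module.Basis ι k X.carrier)
    (σ : Equiv.Perm ι) (μ : ι → k) (hμ : ∀ i, IsUnit (μ i)) (p b : ι) :
    dev (wB v σ μ hμ p) (v b) = if b = σ.symm p then μ p else 0 := by
  show ((v.dualBasis.reindex σ).isUnitSMul hμ p) (v b) = _
  rw [Module.Basis.isUnitSMul_apply, Module.Basis.reindex_apply, LinearMap.smul_apply,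
    Module.Basis.dualBasis_apply_self]
  simp only [smul_eq_mul, mul_ite, mul_one, mul_zero]

end TaftDouble
namespace TaftDouble
variable {k : Type} [Field k] (S : TaftDouble k)

lemma qint_mul (m : ℕ) : (S.q - 1) * S.qint m = S.q ^ m - 1 := by
  rw [qint, mul_comm]
  exact geom_sum_mul S.q m

lemma q_sub_one_ne_zero : S.q - 1 ≠ 0 := sub_ne_zero.mpr S.q_ne_one

lemma alphaq_mul (i l : ℕ) :
    (S.q - 1) * S.alphaq i l = (S.q ^ (i:ℤ) - 1) * (1 - S.q ^ ((i:ℤ) - (l:ℤ))) := by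
  rw [alphaq, ← mul_assoc, qint_mul, zpow_natCast]

lemma alphaq_self (m : ℕ) : S.alphaq m m = 0 := by
  rw [alphaq]
  simp

lemma q_zpow_n : S.q ^ ((S.n : ℤ)) = 1 := by
  rw [zpow_natCast]; exact S.q_pow_n

lemma d_lt (r : ZMod S.n) (l i : ℕ) (hi : 1 ≤ i) (hil : i < l) :
    S.qpow (2 * (i : ZMod S.n) - (l : ZMod S.n)) * S.alphaq (l - i) l = S.alphaq i l := by
  have hq0 := S.q_ne_zero
  apply mul_left_cancel₀ S.q_sub_one_ne_zero
  rw [mul_left_comm, alphaq_mul, alphaq_mul]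
  have hcast : ((2 * (i:ℤ) - (l:ℤ) : ℤ) : ZMod S.n) = 2 * (i : ZMod S.n) - (l : ZMod S.n) := by
    push_cast; ring
  rw [← hcast, qpow_intCast]
  have hli : ((l - i : ℕ) : ℤ) = (l : ℤ) - (i : ℤ) := by omega
  rw [hli]
  set u := S.q ^ (i : ℤ) with hu
  set w := S.q ^ (l : ℤ) with hw
  have hu0 : u ≠ 0 := zpow_ne_zero _ hq0
  have hw0 : w ≠ 0 := zpow_ne_zero _ hq0
  have e1 : S.q ^ (2 * (i:ℤ) - l) = u * u / w := by
    rw [show 2*(i:ℤ) - l = i + i - l by ring, zpow_sub₀ hq0, zpow_add₀ hq0]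
  have e2 : S.q ^ ((l:ℤ) - i) = w / u := by rw [zpow_sub₀ hq0]
  have e3 : S.q ^ ((l:ℤ) - i - l) = 1 / u := by
    rw [show (l:ℤ) - i - l = 0 - i by ring, zpow_sub₀ hq0, zpow_zero]
  have e4 : S.q ^ ((i:ℤ) - l) = u / w := by rw [zpow_sub₀ hq0]
  rw [e1, e2, e3, e4]
  field_simp

lemma d_gt (r : ZMod S.n) (l i : ℕ) (hl : 1 ≤ l) (hli : l < i) (hin : i < S.n) :
    S.qpow (2 * (i : ZMod S.n) - (l : ZMod S.n)) * S.alphaq (S.n - i) (S.n - l)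
      = S.alphaq (i - l) (S.n - l) := by
  have hq0 := S.q_ne_zero
  apply mul_left_cancel₀ S.q_sub_one_ne_zero
  rw [mul_left_comm, alphaq_mul, alphaq_mul]
  have hcast : ((2 * (i:ℤ) - (l:ℤ) : ℤ) : ZMod S.n) = 2 * (i : ZMod S.n) - (l : ZMod S.n) := by
    push_cast; ring
  rw [← hcast, qpow_intCast]
  have c1 : ((S.n - i : ℕ) : ℤ) = (S.n : ℤ) - i := by omega
  have c2 : ((S.n - l : ℕ) : ℤ) = (S.n : ℤ) - l := by omega
  have c3 : ((i - l : ℕ) : ℤ) = (i : ℤ) - l := by omega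
  rw [c1, c2, c3]
  set u := S.q ^ (i : ℤ) with hu
  set w := S.q ^ (l : ℤ) with hw
  have hu0 : u ≠ 0 := zpow_ne_zero _ hq0
  have hw0 : w ≠ 0 := zpow_ne_zero _ hq0
  have e1 : S.q ^ (2 * (i:ℤ) - l) = u * u / w := by
    rw [show 2*(i:ℤ) - l = i + i - l by ring, zpow_sub₀ hq0, zpow_add₀ hq0]
  have e2 : S.q ^ ((S.n:ℤ) - i) = 1 / u := by
    rw [zpow_sub₀ hq0, S.q_zpow_n]
  have e3 : S.q ^ ((S.n:ℤ) - i - ((S.n:ℤ) - l)) = w / u := by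
    rw [show (S.n:ℤ) - i - ((S.n:ℤ) - l) = l - i by ring, zpow_sub₀ hq0]
  have e4 : S.q ^ ((i:ℤ) - l) = u / w := by rw [zpow_sub₀ hq0]
  have e5 : S.q ^ ((i:ℤ) - l - ((S.n:ℤ) - l)) = u := by
    rw [show (i:ℤ) - l - ((S.n:ℤ) - l) = i - S.n by ring, zpow_sub₀ hq0, S.q_zpow_n, div_one]
  rw [e1, e2, e3, e4, e5]
  field_simp

lemma q_half (m : ℕ) (hm : S.n = m + m) : S.q ^ m = -1 := by
  have hn := S.hn
  have h2 : S.q ^ m * S.q ^ m = 1 := by rw [← pow_add, ← hm, S.q_pow_n]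
  have hm1 : 0 < m := by omega
  have hm2 : m < S.n := by omega
  have hne : S.q ^ m ≠ 1 := S.hq.pow_ne_one_of_pos_of_lt hm1.ne' hm2
  rcases mul_self_eq_one_iff.mp h2 with h | h
  · exact absurd h hne
  · exact h

lemma sign_T : ((-1 : k)) ^ (S.n - 1) * S.q ^ ((S.n - 1) * (S.n - 2) / 2) = S.q := by
  have hn := S.hn
  rcases Nat.even_or_odd S.n with ⟨m, hm⟩ | ⟨m, hm⟩
  · -- n = m + m, m ≥ 2
    have hm2 : 2 ≤ m := by omega
    have h2 : (S.n - 1) * (S.n - 2) = 2 * (S.n * (m - 2) + (m + 1)) := by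
      obtain ⟨c, rfl⟩ : ∃ c, m = c + 2 := ⟨m - 2, by omega⟩
      rw [hm]
      have e1 : (c+2) + (c+2) - 1 = 2*c + 3 := by omega
      have e2 : (c+2) + (c+2) - 2 = 2*c + 2 := by omega
      have e3 : c + 2 - 2 = c := by omega
      rw [e1, e2, e3]; ring
    have hT : (S.n - 1) * (S.n - 2) / 2 = S.n * (m - 2) + (m + 1) := by omega
    have hodd : Odd (S.n - 1) := ⟨m - 1, by omega⟩
    rw [hT, pow_add, pow_mul, S.q_pow_n, one_pow, one_mul, hodd.neg_one_pow,
      pow_succ, S.q_half m hm]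
    ring
  · -- n = 2m+1, m ≥ 1
    have hm1 : 1 ≤ m := by omega
    have h2 : (S.n - 1) * (S.n - 2) = 2 * (S.n * (m - 1) + 1) := by
      obtain ⟨c, rfl⟩ : ∃ c, m = c + 1 := ⟨m - 1, by omega⟩
      rw [hm]
      have e1 : 2*(c+1) + 1 - 1 = 2*c + 2 := by omega
      have e2 : 2*(c+1) + 1 - 2 = 2*c + 1 := by omega
      have e3 : c + 1 - 1 = c := by omega
      rw [e1, e2, e3]; ring
    have hT : (S.n - 1) * (S.n - 2) / 2 = S.n * (m - 1) + 1 := by omega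
    have heven : Even (S.n - 1) := ⟨m, by omega⟩
    rw [hT, pow_add, pow_mul, S.q_pow_n, one_pow, one_mul, heven.neg_one_pow, one_mul,
      pow_one]

end TaftDouble
namespace TaftDouble
variable {k : Type} [Field k] (S : TaftDouble k)

/-- The ladder scalars. -/
def gam (r : ZMod S.n) (l : ℕ) (t : ℕ) : k :=
  -(S.qpow ((t : ZMod S.n) + 2 - r - (l : ZMod S.n)))

/-- Partial products of ladder scalars. -/
def Pp (r : ZMod S.n) (l : ℕ) (i : ℕ) : k := ∏ t ∈ Finset.range i, S.gam r l t

lemma gam_ne_zero (r : ZMod S.n) (l t : ℕ) : S.gam r l t ≠ 0 :=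
  neg_ne_zero.mpr (S.qpow_ne_zero _)

lemma Pp_ne_zero (r : ZMod S.n) (l i : ℕ) : S.Pp r l i ≠ 0 :=
  Finset.prod_ne_zero_iff.mpr fun t _ => S.gam_ne_zero r l t

lemma Pp_succ (r : ZMod S.n) (l i : ℕ) :
    S.Pp r l (i + 1) = S.Pp r l i * S.gam r l i := Finset.prod_range_succ _ _

lemma qpow_prod (m : ℕ) (f : ℕ → ZMod S.n) :
    ∏ t ∈ Finset.range m, S.qpow (f t) = S.qpow (∑ t ∈ Finset.range m, f t) := by
  induction m with
  | zero => simp [qpow_zero]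
  | succ m ih => rw [Finset.prod_range_succ, Finset.sum_range_succ, ih, qpow_add]

lemma Pp_last (r : ZMod S.n) (l : ℕ) :
    S.Pp r l (S.n - 1) = S.qpow (r + (l : ZMod S.n) - 1) := by
  have hn := S.hn
  haveI : NeZero S.n := ⟨by omega⟩
  have h1 : S.Pp r l (S.n - 1)
      = (-1 : k) ^ (S.n - 1) * S.qpow (∑ t ∈ Finset.range (S.n - 1),
          ((t : ZMod S.n) + 2 - r - (l : ZMod S.n))) := by
    rw [Pp]
    have hfac : ∀ t ∈ Finset.range (S.n - 1),
        S.gam r l t = (-1 : k) * S.qpow ((t : ZMod S.n) + 2 - r - (l : ZMod S.n)) :=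
      fun t _ => by rw [gam]; ring
    rw [Finset.prod_congr rfl hfac, Finset.prod_mul_distrib, Finset.prod_const,
      Finset.card_range, ← S.qpow_prod]
  have h2 : (∑ t ∈ Finset.range (S.n - 1), ((t : ZMod S.n) + 2 - r - (l : ZMod S.n)))
      = (((S.n - 1) * (S.n - 2) / 2 : ℕ) : ZMod S.n) + (r + (l : ZMod S.n) - 2) := by
    rw [Finset.sum_sub_distrib, Finset.sum_sub_distrib, Finset.sum_add_distrib]
    rw [Finset.sum_const, Finset.sum_const, Finset.sum_const, Finset.card_range]
    have hg := Finset.sum_range_id_mul_two (S.n - 1)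
    have hg2 : S.n - 1 - 1 = S.n - 2 := by omega
    rw [hg2] at hg
    have hnat : (∑ t ∈ Finset.range (S.n - 1), t) = (S.n - 1) * (S.n - 2) / 2 := by
      omega
    have hsum : (∑ t ∈ Finset.range (S.n - 1), (t : ZMod S.n))
        = (((S.n - 1) * (S.n - 2) / 2 : ℕ) : ZMod S.n) := by
      rw [← Nat.cast_sum, hnat]
    rw [hsum]
    have hc : ((S.n - 1 : ℕ) : ZMod S.n) = -1 := by
      rw [Nat.cast_sub (by omega : 1 ≤ S.n), Nat.cast_one, ZMod.natCast_self]
      ring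
    rw [nsmul_eq_mul, nsmul_eq_mul, nsmul_eq_mul, hc]
    ring
  rw [h1, h2, qpow_add, ← mul_assoc, qpow_natCast, S.sign_T]
  have : S.q = S.qpow ((1 : ℕ) : ZMod S.n) := by rw [qpow_natCast, pow_one]
  rw [this, ← qpow_add]
  congr 1
  push_cast
  ring

end TaftDouble
namespace TaftDouble
variable {k : Type} [Field k] (S : TaftDouble k)

/-- The reversal permutation on the band index set. -/
def sigma2 (n s : ℕ) : Equiv.Perm (Fin n × Fin s) := Equiv.prodCongr Fin.revPerm Fin.revPerm

lemma sigma2_symm_apply (n s : ℕ) (p : Fin n × Fin s) :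
    (sigma2 n s).symm p = (p.1.rev, p.2.rev) := rfl

section Eval

variable {S}
variable {s : ℕ} {X : SMod S} (v : Module.Basis (Fin S.n × Fin s) k X.carrier)
  (μ2 : ℕ → ℕ → k) (hμ : ∀ p : Fin S.n × Fin s, IsUnit (μ2 p.1 p.2))

/-- The candidate dual band basis. -/
def wD : Module.Basis (Fin S.n × Fin s) k X.dual.carrier :=
  wB v (sigma2 S.n s) (fun p => μ2 p.1 p.2) hμ

lemma dev_w_v (p b : Fin S.n × Fin s) :
    dev (wD v μ2 hμ p) (v b)
      = if (b.1 : ℕ) + (p.1 : ℕ) + 1 = S.n ∧ (b.2 : ℕ) + (p.2 : ℕ) + 1 = s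
        then μ2 p.1 p.2 else 0 := by
  rw [wD, dev_wB, sigma2_symm_apply]
  have h1 := b.1.isLt
  have h2 := b.2.isLt
  have h3 := p.1.isLt
  have h4 := p.2.isLt
  have hiff : (b = (p.1.rev, p.2.rev))
      ↔ ((b.1 : ℕ) + (p.1 : ℕ) + 1 = S.n ∧ (b.2 : ℕ) + (p.2 : ℕ) + 1 = s) := by
    rw [Prod.ext_iff, Fin.ext_iff, Fin.ext_iff, Fin.val_rev, Fin.val_rev]
    constructor <;> intro h <;> omega
  simp only [hiff]

lemma dev_w_fe2 (p : Fin S.n × Fin s) (t1 t2 : ℕ) :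
    dev (wD v μ2 hμ p) (fe2 (⇑v) t1 t2)
      = if t1 + (p.1 : ℕ) + 1 = S.n ∧ t2 + (p.2 : ℕ) + 1 = s
        then μ2 p.1 p.2 else 0 := by
  rw [fe2]
  by_cases h1 : t1 < S.n ∧ t2 < s
  · rw [dif_pos h1, dev_w_v]
  · rw [dif_neg h1, dev_apply_zero, eq_comm, if_neg]
    intro hc
    have h3 := p.1.isLt
    have h4 := p.2.isLt
    omega

lemma dev_fe2_v (t1 t2 : ℕ) (b : Fin S.n × Fin s) :
    dev (fe2 (⇑(wD v μ2 hμ)) t1 t2) (v b)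
      = if (b.1 : ℕ) + t1 + 1 = S.n ∧ (b.2 : ℕ) + t2 + 1 = s
        then μ2 t1 t2 else 0 := by
  rw [fe2]
  by_cases h1 : t1 < S.n ∧ t2 < s
  · rw [dif_pos h1, dev_w_v]
  · rw [dif_neg h1, dev_zero, eq_comm, if_neg]
    intro hc
    have h3 := b.1.isLt
    have h4 := b.2.isLt
    omega

variable {r : ZMod S.n} {l : ℕ}

lemma eigen_pow {g : S.H} {c : k} {m : X.carrier} (h : g • m = c • m) (t : ℕ) :
    (g ^ t) • m = (c ^ t) • m := by
  induction t with
  | zero => simp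
  | succ t ih =>
      rw [pow_succ, pow_succ, mul_smul, h, smul_comm, ih, ← mul_smul, mul_comm, mul_smul]

lemma dev_smul_b
    (hb : ∀ p : Fin S.n × Fin s, S.b • (v p : X.carrier)
      = S.qpow (r + (l : ZMod S.n) + ((p.1 : ℕ) : ZMod S.n)) • v p)
    (φ : X.dual.carrier) (b : Fin S.n × Fin s) :
    dev (S.b • φ) (v b)
      = S.qpow (-(r + (l : ZMod S.n) + ((b.1 : ℕ) : ZMod S.n))) * dev φ (v b) := by
  rw [dev_smulH, S.antipode_b, unop_op, eigen_pow (hb b), S.qpow_pow_pred, dev_apply_smulk]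

lemma dev_smul_c
    (hc : ∀ p : Fin S.n × Fin s, S.c • (v p : X.carrier)
      = S.qpow (((p.1 : ℕ) : ZMod S.n) + 1 - r) • v p)
    (φ : X.dual.carrier) (b : Fin S.n × Fin s) :
    dev (S.c • φ) (v b)
      = S.qpow (-(((b.1 : ℕ) : ZMod S.n) + 1 - r)) * dev φ (v b) := by
  rw [dev_smulH, S.antipode_c, unop_op, eigen_pow (hc b), S.qpow_pow_pred, dev_apply_smulk]

lemma dev_smul_a
    (hb : ∀ p : Fin S.n × Fin s, S.b • (v p : X.carrier)
      = S.qpow (r + (l : ZMod S.n) + ((p.1 : ℕ) : ZMod S.n)) • v p)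
    (φ : X.dual.carrier) (b : Fin S.n × Fin s) :
    dev (S.a • φ) (v b)
      = -(S.qpow (-(r + (l : ZMod S.n) + ((b.1 : ℕ) : ZMod S.n)))
          * dev φ (S.a • (v b : X.carrier))) := by
  rw [dev_smulH, S.antipode_a, unop_op, neg_smul, dev_apply_neg, mul_smul,
    eigen_pow (hb b), S.qpow_pow_pred, smul_comm, dev_apply_smulk]

lemma dev_smul_d
    (hc : ∀ p : Fin S.n × Fin s, S.c • (v p : X.carrier)
      = S.qpow (((p.1 : ℕ) : ZMod S.n) + 1 - r) • v p)
    (φ : X.dual.carrier) (b : Fin S.n × Fin s) :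
    dev (S.d • φ) (v b)
      = -(S.qpow (-(((b.1 : ℕ) : ZMod S.n) + 1 - r))
          * dev φ (S.d • (v b : X.carrier))) := by
  rw [dev_smulH, S.antipode_d, unop_op, neg_smul, dev_apply_neg, mul_smul,
    eigen_pow (hc b), S.qpow_pow_pred, smul_comm, dev_apply_smulk]

end Eval

/-- Cast helper. -/
lemma castz (S : TaftDouble k) (A B : ℕ) (h : A + B = S.n) :
    ((A : ZMod S.n)) = -(B : ZMod S.n) := by
  have h0 : ((A + B : ℕ) : ZMod S.n) = 0 := by rw [h, ZMod.natCast_self]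
  push_cast at h0
  linear_combination h0

end TaftDouble
namespace TaftDouble
variable {k : Type} [Field k]

set_option maxHeartbeats 3000000 in
lemma dual_band_fin (S : TaftDouble k) (l : ℕ) (r : ZMod S.n)
    (hl : 1 ≤ l) (hln : l < S.n) (x : k) (s : ℕ) (hs : 1 ≤ s)
    (X : SMod S) (hX : S.IsBandFin s l r x X) :
    S.IsBandFin s (S.n - l) (1 - r) (-(S.q ^ l) * x) X.dual := by
  have hn := S.hn
  obtain ⟨v, ha, hd, hb, hc⟩ := hX
  set μ2 : ℕ → ℕ → k := fun i j => S.Pp r l i * (-(S.q ^ l)) ^ j with hμ2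
  have hμ : ∀ p : Fin S.n × Fin s, IsUnit (μ2 p.1 p.2) := by
    intro p
    apply IsUnit.mul (Ne.isUnit (S.Pp_ne_zero r l _))
    exact (Ne.isUnit (neg_ne_zero.mpr (pow_ne_zero _ S.q_ne_zero))).pow _
  have hnl : ((S.n - l : ℕ) : ZMod S.n) = -(l : ZMod S.n) := S.castz _ _ (by omega)
  have hP0 : S.Pp r l 0 = 1 := Finset.prod_range_zero _
  have hqln : S.q ^ l * S.q ^ (S.n - l) = 1 := by
    rw [← pow_add, show l + (S.n - l) = S.n from by omega, S.q_pow_n]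
  have key1 : ∀ b1 i j : ℕ, b1 = 0 → i = 0 → 1 ≤ j →
      -(S.qpow (-((b1 : ZMod S.n) + 1 - r)) * μ2 i j) = μ2 (S.n - 1) (j - 1) := by
    intro b1 i j h0 hi0 hj
    subst h0; subst hi0
    obtain ⟨j', rfl⟩ : ∃ j', j = j' + 1 := ⟨j - 1, by omega⟩
    rw [hμ2]
    simp only
    rw [Nat.add_sub_cancel, hP0, S.Pp_last, one_mul, pow_succ]
    have hsplit : S.qpow (-(((0 : ℕ) : ZMod S.n) + 1 - r)) * S.q ^ l
        = S.qpow (r + (l : ZMod S.n) - 1) := by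
      rw [← S.qpow_natCast l, ← S.qpow_add]
      congr 1
      push_cast
      ring
    linear_combination ((-(S.q ^ l)) ^ j') * hsplit
  have key2 : ∀ b1 i j : ℕ, b1 = 0 → i = 0 →
      -(S.qpow (-((b1 : ZMod S.n) + 1 - r)) * (x * S.q ^ l * μ2 i j))
        = -(S.q ^ l) * x * S.q ^ (S.n - l) * μ2 (S.n - 1) j := by
    intro b1 i j h0 hi0
    subst h0; subst hi0
    rw [hμ2]
    simp only
    rw [hP0, S.Pp_last, one_mul]
    have hsplit : S.qpow (-(((0 : ℕ) : ZMod S.n) + 1 - r)) * S.q ^ l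
        = S.qpow (r + (l : ZMod S.n) - 1) := by
      rw [← S.qpow_natCast l, ← S.qpow_add]
      congr 1
      push_cast
      ring
    linear_combination (-(x * (-(S.q ^ l)) ^ j)) * hsplit
      + (x * S.qpow (r + (l : ZMod S.n) - 1) * (-(S.q ^ l)) ^ j) * hqln
  have key3eq : ∀ b1 i j : ℕ, b1 + i = S.n → b1 ≤ S.n - l → i ≤ l →
      -(S.qpow (-((b1 : ZMod S.n) + 1 - r)) * (S.alphaq b1 (S.n - l) * μ2 i j))
        = S.alphaq i l * μ2 (i - 1) j := by
    intro b1 i j hbin hble hile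
    have h1 : i = l := by omega
    have h2 : b1 = S.n - l := by omega
    rw [h1, h2, S.alphaq_self, S.alphaq_self]
    ring
  have key3lt : ∀ b1 i j : ℕ, b1 + i = S.n → 1 ≤ i → i < l →
      -(S.qpow (-((b1 : ZMod S.n) + 1 - r)) * (S.alphaq (b1 + l - S.n) l * μ2 i j))
        = S.alphaq i l * μ2 (i - 1) j := by
    intro b1 i j hbin hi hil
    obtain rfl : b1 = S.n - i := by omega
    have e : ((S.n - i : ℕ) : ZMod S.n) = -((i : ℕ) : ZMod S.n) := S.castz _ _ (by omega)
    rw [show S.n - i + l - S.n = l - i from by omega]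
    obtain ⟨i', rfl⟩ : ∃ i', i = i' + 1 := ⟨i - 1, by omega⟩
    rw [hμ2]
    simp only
    rw [Nat.add_sub_cancel, S.Pp_succ, gam]
    have hdlt := S.d_lt r l (i' + 1) (by omega) hil
    have comb : S.qpow (-((((S.n - (i' + 1) : ℕ)) : ZMod S.n) + 1 - r))
        * S.qpow (((i' : ℕ) : ZMod S.n) + 2 - r - (l : ZMod S.n))
        = S.qpow (2 * (((i' + 1 : ℕ)) : ZMod S.n) - (l : ZMod S.n)) := by
      rw [← S.qpow_add]
      congr 1
      rw [e]
      push_cast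
      ring
    linear_combination (S.alphaq (l - (i' + 1)) l * (S.Pp r l i' * (-(S.q ^ l)) ^ j)) * comb
      + (S.Pp r l i' * (-(S.q ^ l)) ^ j) * hdlt
  have key3gt : ∀ b1 i j : ℕ, b1 + i = S.n → l < i → i < S.n →
      -(S.qpow (-((b1 : ZMod S.n) + 1 - r)) * (S.alphaq b1 (S.n - l) * μ2 i j))
        = S.alphaq (i - l) (S.n - l) * μ2 (i - 1) j := by
    intro b1 i j hbin hli hin
    obtain rfl : b1 = S.n - i := by omega
    have e : ((S.n - i : ℕ) : ZMod S.n) = -((i : ℕ) : ZMod S.n) := S.castz _ _ (by omega)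
    obtain ⟨i', rfl⟩ : ∃ i', i = i' + 1 := ⟨i - 1, by omega⟩
    rw [hμ2]
    simp only
    rw [Nat.add_sub_cancel, S.Pp_succ, gam]
    have hdgt := S.d_gt r l (i' + 1) hl hli hin
    have comb : S.qpow (-((((S.n - (i' + 1) : ℕ)) : ZMod S.n) + 1 - r))
        * S.qpow (((i' : ℕ) : ZMod S.n) + 2 - r - (l : ZMod S.n))
        = S.qpow (2 * (((i' + 1 : ℕ)) : ZMod S.n) - (l : ZMod S.n)) := by
      rw [← S.qpow_add]
      congr 1
      rw [e]
      push_cast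
      ring
    linear_combination (S.alphaq (S.n - (i' + 1)) (S.n - l) * (S.Pp r l i' * (-(S.q ^ l)) ^ j)) * comb
      + (S.Pp r l i' * (-(S.q ^ l)) ^ j) * hdgt
  refine ⟨wD v μ2 hμ, ?_, ?_, ?_, ?_⟩
  · -- a action
    intro p
    have hb1 := p.1.isLt
    apply dev_ext v
    intro b
    have hb1' := b.1.isLt
    rw [dev_smul_a v hb, ha b, dev_w_fe2, dev_fe2_v]
    by_cases h : ((b.1:ℕ) + 1) + (p.1:ℕ) + 1 = S.n ∧ (b.2:ℕ) + (p.2:ℕ) + 1 = s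
    · rw [if_pos h, if_pos (show (b.1:ℕ) + ((p.1:ℕ) + 1) + 1 = S.n ∧ (b.2:ℕ) + (p.2:ℕ) + 1 = s
        from ⟨by omega, h.2⟩)]
      have e : ((b.1:ℕ) : ZMod S.n) = -(((p.1:ℕ) : ZMod S.n) + 2) := by
        have h2 := S.castz (b.1:ℕ) ((p.1:ℕ)+2) (by omega)
        push_cast at h2 ⊢
        linear_combination h2
      have harg : -(r + (l : ZMod S.n) + ((b.1:ℕ) : ZMod S.n))
          = ((p.1:ℕ) : ZMod S.n) + 2 - r - (l : ZMod S.n) := by rw [e]; ring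
      rw [harg, hμ2]
      simp only
      rw [S.Pp_succ, gam]
      ring
    · rw [if_neg h, if_neg (by omega), mul_zero, neg_zero]
  · -- d action
    intro p
    have hp1 := p.1.isLt
    have hp2 := p.2.isLt
    apply dev_ext v
    intro b
    have hb1' := b.1.isLt
    have hb2' := b.2.isLt
    rw [dev_smul_d v hc, hd b]
    rw [show S.n - (S.n - l) = l from by omega,
      show (p.1 : ℕ) + (S.n - l) - S.n = (p.1 : ℕ) - l from by omega]
    simp only [apply_ite (dev (wD v μ2 hμ p)),
      apply_ite (fun z : X.dual.carrier => dev z (v b)),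
      dev_apply_add, dev_apply_smulk, dev_apply_zero, dev_add, dev_smulk, dev_zero,
      dev_w_fe2, dev_fe2_v]
    split_ifs <;>
      first
        | omega
        | ring1
        | linear_combination key1 (b.1 : ℕ) (p.1 : ℕ) (p.2 : ℕ) (by omega) (by omega) (by omega)
        | linear_combination key2 (b.1 : ℕ) (p.1 : ℕ) (p.2 : ℕ) (by omega) (by omega)
        | linear_combination key3eq (b.1 : ℕ) (p.1 : ℕ) (p.2 : ℕ) (by omega) (by omega) (by omega)
        | linear_combination key3lt (b.1 : ℕ) (p.1 : ℕ) (p.2 : ℕ) (by omega) (by omega) (by omega)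
        | linear_combination key3gt (b.1 : ℕ) (p.1 : ℕ) (p.2 : ℕ) (by omega) (by omega) (by omega)
  · -- b action
    intro p
    have hp1 := p.1.isLt
    apply dev_ext v
    intro b
    have hb1' := b.1.isLt
    rw [dev_smul_b v hb, dev_smulk, dev_w_v]
    by_cases h : (b.1:ℕ) + (p.1:ℕ) + 1 = S.n ∧ (b.2:ℕ) + (p.2:ℕ) + 1 = s
    · rw [if_pos h]
      have e : ((b.1:ℕ) : ZMod S.n) = -(((p.1:ℕ) : ZMod S.n) + 1) := by
        have h2 := S.castz (b.1:ℕ) ((p.1:ℕ)+1) (by omega)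
        push_cast at h2 ⊢
        linear_combination h2
      congr 1
      rw [hnl, e]
      ring
    · rw [if_neg h, mul_zero, mul_zero]
  · -- c action
    intro p
    have hp1 := p.1.isLt
    apply dev_ext v
    intro b
    have hb1' := b.1.isLt
    rw [dev_smul_c v hc, dev_smulk, dev_w_v]
    by_cases h : (b.1:ℕ) + (p.1:ℕ) + 1 = S.n ∧ (b.2:ℕ) + (p.2:ℕ) + 1 = s
    · rw [if_pos h]
      have e : ((b.1:ℕ) : ZMod S.n) = -(((p.1:ℕ) : ZMod S.n) + 1) := by
        have h2 := S.castz (b.1:ℕ) ((p.1:ℕ)+1) (by omega)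
        push_cast at h2 ⊢
        linear_combination h2
      congr 1
      rw [e]
      ring
    · rw [if_neg h, mul_zero, mul_zero]

end TaftDouble
namespace TaftDouble
variable {k : Type} [Field k]

set_option maxHeartbeats 3000000 in
lemma dual_band_inf (S : TaftDouble k) (l : ℕ) (r : ZMod S.n)
    (hl : 1 ≤ l) (hln : l < S.n) (s : ℕ) (hs : 1 ≤ s)
    (X : SMod S) (hX : S.IsBandInf s l r X) :
    S.IsBandInf s (S.n - l) (1 - r) X.dual := by
  have hn := S.hn
  obtain ⟨v, ha, hd, hb, hc⟩ := hX
  set C : k := -(S.qpow (-(l : ZMod S.n))) with hC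
  set μ2 : ℕ → ℕ → k := fun i j => S.Pp r l i * C ^ (if l ≤ i then j + 1 else j) with hμ2
  have hCne : C ≠ 0 := by
    rw [hC]
    exact neg_ne_zero.mpr (S.qpow_ne_zero _)
  have hμ : ∀ p : Fin S.n × Fin s, IsUnit (μ2 p.1 p.2) := by
    intro p
    exact IsUnit.mul (Ne.isUnit (S.Pp_ne_zero r l _)) ((Ne.isUnit hCne).pow _)
  have hnl : ((S.n - l : ℕ) : ZMod S.n) = -(l : ZMod S.n) := S.castz _ _ (by omega)
  have hP0 : S.Pp r l 0 = 1 := Finset.prod_range_zero _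
  -- keys
  have keyA1 : ∀ b1 i j : ℕ, b1 + i + 2 = S.n → ¬ b1 = S.n - l - 1 →
      -(S.qpow (-(r + (l : ZMod S.n) + (b1 : ZMod S.n))) * μ2 i j) = μ2 (i + 1) j := by
    intro b1 i j hsum hne
    have e : (b1 : ZMod S.n) = -(((i : ℕ) : ZMod S.n) + 2) := by
      have e0 := S.castz b1 (i + 2) (by omega)
      push_cast at e0 ⊢
      linear_combination e0
    rw [hμ2]
    simp only
    rw [S.Pp_succ, gam]
    have hind : (if l ≤ i + 1 then j + 1 else j) = (if l ≤ i then j + 1 else j) := by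
      split_ifs <;> omega
    rw [hind, show -(r + (l : ZMod S.n) + (b1 : ZMod S.n))
      = ((i : ℕ) : ZMod S.n) + 2 - r - (l : ZMod S.n) from by rw [e]; ring]
    ring1
  have keyA2 : ∀ b1 i j : ℕ, b1 = S.n - l - 1 → i = l - 1 → 1 ≤ j →
      -(S.qpow (-(r + (l : ZMod S.n) + (b1 : ZMod S.n))) * μ2 i j) = μ2 (i + 1) (j - 1) := by
    intro b1 i j hb1 hi hj
    subst hb1; subst hi
    rw [hμ2]
    simp only
    rw [if_neg (by omega : ¬ l ≤ l - 1), if_pos (by omega : l ≤ l - 1 + 1),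
      show (j - 1) + 1 = j from by omega, S.Pp_succ, gam]
    have e0 := S.castz (S.n - l - 1) (l + 1) (by omega)
    have e1 : ((l - 1 : ℕ) : ZMod S.n) = (l : ZMod S.n) - 1 := by
      rw [Nat.cast_sub hl, Nat.cast_one]
    rw [show -(r + (l : ZMod S.n) + ((S.n - l - 1 : ℕ) : ZMod S.n))
      = ((l - 1 : ℕ) : ZMod S.n) + 2 - r - (l : ZMod S.n) from by
        rw [e0, e1]; push_cast; ring]
    ring1
  have keyI1 : ∀ b1 i j : ℕ, b1 = 0 → i = 0 →
      -(S.qpow (-((b1 : ZMod S.n) + 1 - r)) * μ2 i j) = μ2 (S.n - 1) j := by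
    intro b1 i j hb1 hi
    subst hb1; subst hi
    rw [hμ2]
    simp only
    rw [if_neg (by omega : ¬ l ≤ 0), if_pos (by omega : l ≤ S.n - 1), hP0, S.Pp_last,
      one_mul, pow_succ, hC]
    have hsplit : S.qpow (r + (l : ZMod S.n) - 1) * S.qpow (-(l : ZMod S.n))
        = S.qpow (-(((0 : ℕ) : ZMod S.n) + 1 - r)) := by
      rw [← S.qpow_add]
      congr 1
      push_cast
      ring
    linear_combination ((-(S.qpow (-(l : ZMod S.n)))) ^ j) * hsplit
  have key3eq : ∀ b1 i j : ℕ, b1 + i = S.n → b1 ≤ S.n - l → i ≤ l →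
      -(S.qpow (-((b1 : ZMod S.n) + 1 - r)) * (S.alphaq b1 (S.n - l) * μ2 i j))
        = S.alphaq i l * μ2 (i - 1) j := by
    intro b1 i j hbin hble hile
    have h1 : i = l := by omega
    have h2 : b1 = S.n - l := by omega
    rw [h1, h2, S.alphaq_self, S.alphaq_self]
    ring
  have key3lt : ∀ b1 i j : ℕ, b1 + i = S.n → 1 ≤ i → i < l →
      -(S.qpow (-((b1 : ZMod S.n) + 1 - r)) * (S.alphaq (b1 + l - S.n) l * μ2 i j))
        = S.alphaq i l * μ2 (i - 1) j := by
    intro b1 i j hbin hi hil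
    obtain rfl : b1 = S.n - i := by omega
    have e : ((S.n - i : ℕ) : ZMod S.n) = -((i : ℕ) : ZMod S.n) := S.castz _ _ (by omega)
    rw [show S.n - i + l - S.n = l - i from by omega]
    obtain ⟨i', rfl⟩ : ∃ i', i = i' + 1 := ⟨i - 1, by omega⟩
    rw [hμ2]
    simp only
    rw [Nat.add_sub_cancel, if_neg (by omega : ¬ l ≤ i' + 1), if_neg (by omega : ¬ l ≤ i'),
      S.Pp_succ, gam]
    have hdlt := S.d_lt r l (i' + 1) (by omega) hil
    have comb : S.qpow (-((((S.n - (i' + 1) : ℕ)) : ZMod S.n) + 1 - r))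
        * S.qpow (((i' : ℕ) : ZMod S.n) + 2 - r - (l : ZMod S.n))
        = S.qpow (2 * (((i' + 1 : ℕ)) : ZMod S.n) - (l : ZMod S.n)) := by
      rw [← S.qpow_add]
      congr 1
      rw [e]
      push_cast
      ring
    linear_combination (S.alphaq (l - (i' + 1)) l * (S.Pp r l i' * C ^ j)) * comb
      + (S.Pp r l i' * C ^ j) * hdlt
  have key3gt : ∀ b1 i j : ℕ, b1 + i = S.n → l < i → i < S.n →
      -(S.qpow (-((b1 : ZMod S.n) + 1 - r)) * (S.alphaq b1 (S.n - l) * μ2 i j))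
        = S.alphaq (i - l) (S.n - l) * μ2 (i - 1) j := by
    intro b1 i j hbin hli hin
    obtain rfl : b1 = S.n - i := by omega
    have e : ((S.n - i : ℕ) : ZMod S.n) = -((i : ℕ) : ZMod S.n) := S.castz _ _ (by omega)
    obtain ⟨i', rfl⟩ : ∃ i', i = i' + 1 := ⟨i - 1, by omega⟩
    rw [hμ2]
    simp only
    rw [Nat.add_sub_cancel, if_pos (by omega : l ≤ i' + 1), if_pos (by omega : l ≤ i'),
      S.Pp_succ, gam]
    have hdgt := S.d_gt r l (i' + 1) hl hli hin
    have comb : S.qpow (-((((S.n - (i' + 1) : ℕ)) : ZMod S.n) + 1 - r))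
        * S.qpow (((i' : ℕ) : ZMod S.n) + 2 - r - (l : ZMod S.n))
        = S.qpow (2 * (((i' + 1 : ℕ)) : ZMod S.n) - (l : ZMod S.n)) := by
      rw [← S.qpow_add]
      congr 1
      rw [e]
      push_cast
      ring
    linear_combination
      (S.alphaq (S.n - (i' + 1)) (S.n - l) * (S.Pp r l i' * C ^ (j + 1))) * comb
      + (S.Pp r l i' * C ^ (j + 1)) * hdgt
  refine ⟨wD v μ2 hμ, ?_, ?_, ?_, ?_⟩
  · -- a action
    intro p
    have hp1 := p.1.isLt
    have hp2 := p.2.isLt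
    apply dev_ext v
    intro b
    have hb1' := b.1.isLt
    have hb2' := b.2.isLt
    rw [dev_smul_a v hb, ha b, show S.n - (S.n - l) - 1 = l - 1 from by omega]
    simp only [apply_ite (dev (wD v μ2 hμ p)),
      apply_ite (fun z : X.dual.carrier => dev z (v b)),
      dev_apply_add, dev_apply_smulk, dev_apply_zero, dev_add, dev_smulk, dev_zero,
      dev_w_fe2, dev_fe2_v]
    split_ifs <;>
      first
        | omega
        | ring1
        | linear_combination keyA1 (b.1 : ℕ) (p.1 : ℕ) (p.2 : ℕ) (by omega) (by omega)
        | linear_combination keyA2 (b.1 : ℕ) (p.1 : ℕ) (p.2 : ℕ) (by omega) (by omega) (by omega)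
  · -- d action
    intro p
    have hp1 := p.1.isLt
    have hp2 := p.2.isLt
    apply dev_ext v
    intro b
    have hb1' := b.1.isLt
    have hb2' := b.2.isLt
    rw [dev_smul_d v hc, hd b]
    rw [show S.n - (S.n - l) = l from by omega,
      show (p.1 : ℕ) + (S.n - l) - S.n = (p.1 : ℕ) - l from by omega]
    simp only [apply_ite (dev (wD v μ2 hμ p)),
      apply_ite (fun z : X.dual.carrier => dev z (v b)),
      dev_apply_add, dev_apply_smulk, dev_apply_zero, dev_add, dev_smulk, dev_zero,
      dev_w_fe2, dev_fe2_v]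
    split_ifs <;>
      first
        | omega
        | ring1
        | linear_combination keyI1 (b.1 : ℕ) (p.1 : ℕ) (p.2 : ℕ) (by omega) (by omega)
        | linear_combination key3eq (b.1 : ℕ) (p.1 : ℕ) (p.2 : ℕ) (by omega) (by omega) (by omega)
        | linear_combination key3lt (b.1 : ℕ) (p.1 : ℕ) (p.2 : ℕ) (by omega) (by omega) (by omega)
        | linear_combination key3gt (b.1 : ℕ) (p.1 : ℕ) (p.2 : ℕ) (by omega) (by omega) (by omega)
  · -- b action
    intro p
    have hp1 := p.1.isLt
    apply dev_ext v
    intro b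
    have hb1' := b.1.isLt
    rw [dev_smul_b v hb, dev_smulk, dev_w_v]
    by_cases h : (b.1:ℕ) + (p.1:ℕ) + 1 = S.n ∧ (b.2:ℕ) + (p.2:ℕ) + 1 = s
    · rw [if_pos h]
      have e : ((b.1:ℕ) : ZMod S.n) = -(((p.1:ℕ) : ZMod S.n) + 1) := by
        have h2 := S.castz (b.1:ℕ) ((p.1:ℕ)+1) (by omega)
        push_cast at h2 ⊢
        linear_combination h2
      congr 1
      rw [hnl, e]
      ring
    · rw [if_neg h, mul_zero, mul_zero]
  · -- c action
    intro p
    have hp1 := p.1.isLt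
    apply dev_ext v
    intro b
    have hb1' := b.1.isLt
    rw [dev_smul_c v hc, dev_smulk, dev_w_v]
    by_cases h : (b.1:ℕ) + (p.1:ℕ) + 1 = S.n ∧ (b.2:ℕ) + (p.2:ℕ) + 1 = s
    · rw [if_pos h]
      have e : ((b.1:ℕ) : ZMod S.n) = -(((p.1:ℕ) : ZMod S.n) + 1) := by
        have h2 := S.castz (b.1:ℕ) ((p.1:ℕ)+1) (by omega)
        push_cast at h2 ⊢
        linear_combination h2
      congr 1
      rw [e]
      ring
    · rw [if_neg h, mul_zero, mul_zero]

end TaftDouble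

/-- Lemma 3.13: `M_s(l,r,η)^* ≅ M_s(n-l, 1-r, -ηq^l)`. -/
theorem statement9 (k : Type) [Field k] [IsAlgClosed k] (S : TaftDouble k)
    (l : ℕ) (r : ZMod S.n) (hl : 1 ≤ l) (hln : l < S.n)
    (η : WithTop k) (s : ℕ) (hs : 1 ≤ s)
    (X : SMod S) (hX : S.IsBand s l r η X) :
    S.IsBand s (S.n - l) (1 - r) (pscale (-(S.q ^ l)) η) X.dual := by
  induction η using WithTop.recTopCoe with
  | top => exact S.dual_band_inf l r hl hln s hs X hX
  | coe x => exact S.dual_band_fin l r hl hln x s hs X hX
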